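/- Let k ≥ 4 and r₂, r₃, …, r_k ≥ 1, and let H be the join of the complete graph K₂ with the disjoint union of the empty graph on r₂ vertices and the complete graphs K_{r₃}, …, K_{r_k}. Then the eccentricity matrix ε(H) has exactly one positive eigenvalue. -/

import Mathlib

open Finset Polynomial

noncomputable def ecc {V : Type*} [Fintype V] (G : SimpleGraph V) (u : V) : ℕ :=
  Finset.univ.sup (G.dist u)

noncomputable def eccMatrix {V : Type*} [Fintype V] (G : SimpleGraph V) :
    Matrix V V ℝ := fun u v =>
  if G.dist u v = min (ecc G u) (ecc G v) then (G.dist u v : ℝ) else 0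

theorem eccMatrix_isHermitian {V : Type*} [Fintype V] (G : SimpleGraph V) :
    (eccMatrix G).IsHermitian := by
  unfold Matrix.IsHermitian
  ext u v
  simp only [Matrix.conjTranspose_apply, eccMatrix, star_trivial]
  rw [SimpleGraph.dist_comm, min_comm]

/-- Number of positive eigenvalues (with multiplicity) of a real symmetric matrix. -/
noncomputable def posEigCount {V : Type*} [Fintype V] [DecidableEq V]
    {A : Matrix V V ℝ} (hA : A.IsHermitian) : ℕ :=
  (Finset.univ.filter fun i => 0 < hA.eigenvalues i).card

/-- The join of two simple graphs: disjoint union plus all edges in between. -/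
def graphJoin {α β : Type*} (G : SimpleGraph α) (H : SimpleGraph β) :
    SimpleGraph (α ⊕ β) where
  Adj x y := match x, y with
    | Sum.inl a, Sum.inl b => G.Adj a b
    | Sum.inr a, Sum.inr b => H.Adj a b
    | _, _ => True
  symm := ⟨by rintro (a|a) (b|b) h <;> first | exact G.adj_symm h | exact H.adj_symm h | trivial⟩
  loopless := ⟨by rintro (a|a) h <;> first | exact G.irrefl h | exact H.irrefl h⟩

/-- The disjoint union of two simple graphs. -/
def graphSum {α β : Type*} (G : SimpleGraph α) (H : SimpleGraph β) :
    SimpleGraph (α ⊕ β) where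
  Adj x y := match x, y with
    | Sum.inl a, Sum.inl b => G.Adj a b
    | Sum.inr a, Sum.inr b => H.Adj a b
    | _, _ => False
  symm := ⟨by rintro (a|a) (b|b) h <;> first | exact G.adj_symm h | exact H.adj_symm h | trivial⟩
  loopless := ⟨by rintro (a|a) h <;> first | exact G.irrefl h | exact H.irrefl h⟩

/-- Disjoint union of blocks indexed by `ι`; block `i` has `r i` vertices and is a
clique when `P i` holds and a coclique (independent set) otherwise. -/
def blocksGraph {ι : Type*} (r : ι → ℕ) (P : ι → Prop) :
    SimpleGraph (Σ i, Fin (r i)) where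
  Adj x y := x ≠ y ∧ x.1 = y.1 ∧ P x.1
  symm := ⟨by rintro x y ⟨h1, h2, h3⟩; exact ⟨h1.symm, h2.symm, h2 ▸ h3⟩⟩
  loopless := ⟨fun x h => h.1 rfl⟩


section EigAux
open Matrix
variable {n : Type*} [Fintype n] [DecidableEq n]


variable {n : Type*} [Fintype n] [DecidableEq n]

lemma negSemidef_of_nonpos {A : Matrix n n ℝ} (hA : A.IsHermitian)
    (h : ∀ i, hA.eigenvalues i ≤ 0) : (-A).PosSemidef := by
  have h2 : -A = (hA.eigenvectorUnitary : Matrix n n ℝ) *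
      Matrix.diagonal (RCLike.ofReal ∘ (fun i => - hA.eigenvalues i)) *
      (star (hA.eigenvectorUnitary : Matrix n n ℝ)) := by
    conv_lhs => rw [hA.spectral_theorem, Unitary.conjStarAlgAut_apply]
    rw [← neg_mul, ← mul_neg]
    congr 2
    have hco : (RCLike.ofReal ∘ fun i => -hA.eigenvalues i : n → ℝ)
        = -(RCLike.ofReal ∘ hA.eigenvalues) := by ext i; simp
    rw [hco, Matrix.diagonal_neg]
    rfl
  rw [h2]
  refine (Matrix.posSemidef_diagonal_iff.mpr ?_).mul_mul_conjTranspose_same _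
  intro i
  simpa using neg_nonneg.2 (h i)

lemma exists_pos_eig {A : Matrix n n ℝ} (hA : A.IsHermitian)
    (x : n → ℝ) (hx : 0 < x ⬝ᵥ (A *ᵥ x)) : ∃ i, 0 < hA.eigenvalues i := by
  by_contra h
  push_neg at h
  have hneg := (negSemidef_of_nonpos hA h).re_dotProduct_nonneg x
  simp only [RCLike.star_def, Matrix.neg_mulVec, dotProduct_neg] at hneg
  simp only [star_trivial, RCLike.re_to_real] at hneg
  linarith

lemma orth_dot {A : Matrix n n ℝ} (hA : A.IsHermitian) (p q : n) :
    (hA.eigenvectorBasis p : n → ℝ) ⬝ᵥ (hA.eigenvectorBasis q : n → ℝ)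
      = if p = q then 1 else 0 := by
  have h := hA.eigenvectorBasis.orthonormal
  rw [orthonormal_iff_ite] at h
  have := h p q
  simpa [PiLp.inner_apply, dotProduct, mul_comm] using this

lemma atMostOne {A : Matrix n n ℝ} (hA : A.IsHermitian) (w : n → ℝ)
    (hw : ∀ x : n → ℝ, w ⬝ᵥ x = 0 → x ⬝ᵥ (A *ᵥ x) ≤ 0) :
    (Finset.univ.filter fun i => 0 < hA.eigenvalues i).card ≤ 1 := by
  by_contra hcard
  push_neg at hcard
  obtain ⟨i, hi, j, hj, hij⟩ := Finset.one_lt_card.mp hcard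
  simp only [Finset.mem_filter] at hi hj
  set vi : n → ℝ := (hA.eigenvectorBasis i : n → ℝ) with hvi
  set vj : n → ℝ := (hA.eigenvectorBasis j : n → ℝ) with hvj
  have hii : vi ⬝ᵥ vi = 1 := by simpa using orth_dot hA i i
  have hjj : vj ⬝ᵥ vj = 1 := by simpa using orth_dot hA j j
  have hij0 : vi ⬝ᵥ vj = 0 := by simpa [hij] using orth_dot hA i j
  have hji0 : vj ⬝ᵥ vi = 0 := by simpa [hij, Ne.symm hij] using orth_dot hA j i
  have hAvi : A *ᵥ vi = hA.eigenvalues i • vi := hA.mulVec_eigenvectorBasis i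
  have hAvj : A *ᵥ vj = hA.eigenvalues j • vj := hA.mulVec_eigenvectorBasis j
  set a := w ⬝ᵥ vi with ha
  set b := w ⬝ᵥ vj with hb
  obtain ⟨c, d, hcd0, hcd⟩ : ∃ c d : ℝ, ¬(c = 0 ∧ d = 0) ∧ c * a + d * b = 0 := by
    by_cases h0 : a = 0
    · exact ⟨1, 0, by simp, by simp [h0]⟩
    · exact ⟨b, -a, fun h => h0 (neg_eq_zero.mp h.2), by ring⟩
  set x : n → ℝ := c • vi + d • vj with hx
  have hwx : w ⬝ᵥ x = 0 := by
    simp [hx, dotProduct_add, dotProduct_smul, ← ha, ← hb, smul_eq_mul, hcd]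
  have hq : x ⬝ᵥ (A *ᵥ x) = hA.eigenvalues i * c ^ 2 + hA.eigenvalues j * d ^ 2 := by
    simp only [hx, Matrix.mulVec_add, Matrix.mulVec_smul, hAvi, hAvj,
      dotProduct_add, add_dotProduct, smul_dotProduct,
      dotProduct_smul, smul_eq_mul, hii, hjj, hij0, hji0]
    ring
  have hpos : 0 < x ⬝ᵥ (A *ᵥ x) := by
    rw [hq]
    rcases not_and_or.mp hcd0 with hc | hd
    · have hc2 : 0 < c ^ 2 := by positivity
      nlinarith [sq_nonneg d, hi.2, hj.2]
    · have hd2 : 0 < d ^ 2 := by positivity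
      nlinarith [sq_nonneg c, hi.2, hj.2]
  linarith [hw x hwx]

end EigAux

section GraphPart
open Matrix

variable {k : ℕ} (r : Fin (k - 1) → ℕ)

/-- the graph in question -/
private abbrev GG : SimpleGraph (Fin 2 ⊕ Σ i : Fin (k - 1), Fin (r i)) :=
  graphJoin (⊤ : SimpleGraph (Fin 2)) (blocksGraph r (fun i => (i : ℕ) ≠ 0))

lemma adj_ll {a b : Fin 2} : (GG r).Adj (Sum.inl a) (Sum.inl b) ↔ a ≠ b := Iff.rfl

lemma adj_lr {a : Fin 2} {x : Σ i, Fin (r i)} : (GG r).Adj (Sum.inl a) (Sum.inr x) := trivial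

lemma adj_rl {a : Fin 2} {x : Σ i, Fin (r i)} : (GG r).Adj (Sum.inr x) (Sum.inl a) := trivial

lemma adj_rr {x y : Σ i, Fin (r i)} :
    (GG r).Adj (Sum.inr x) (Sum.inr y) ↔ x ≠ y ∧ x.1 = y.1 ∧ (x.1 : ℕ) ≠ 0 := Iff.rfl


lemma dist_ll {a b : Fin 2} (h : a ≠ b) : (GG r).dist (Sum.inl a) (Sum.inl b) = 1 :=
  SimpleGraph.dist_eq_one_iff_adj.mpr ((adj_ll r).mpr h)

lemma dist_lr {a : Fin 2} {x : Σ i, Fin (r i)} :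
    (GG r).dist (Sum.inl a) (Sum.inr x) = 1 :=
  SimpleGraph.dist_eq_one_iff_adj.mpr (adj_lr r)

lemma dist_rl {a : Fin 2} {x : Σ i, Fin (r i)} :
    (GG r).dist (Sum.inr x) (Sum.inl a) = 1 :=
  SimpleGraph.dist_eq_one_iff_adj.mpr (adj_rl r)

lemma dist_rr_one {x y : Σ i, Fin (r i)} (h : x ≠ y) (h2 : x.1 = y.1) (h3 : (x.1 : ℕ) ≠ 0) :
    (GG r).dist (Sum.inr x) (Sum.inr y) = 1 :=
  SimpleGraph.dist_eq_one_iff_adj.mpr ((adj_rr r).mpr ⟨h, h2, h3⟩)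

lemma dist_rr_two {x y : Σ i, Fin (r i)} (h : x ≠ y) (hna : ¬ (x.1 = y.1 ∧ (x.1 : ℕ) ≠ 0)) :
    (GG r).dist (Sum.inr x) (Sum.inr y) = 2 := by
  have hwalk : (GG r).Walk (Sum.inr x) (Sum.inr y) :=
    SimpleGraph.Walk.cons (adj_rl r (a := 0)) (SimpleGraph.Walk.cons (adj_lr r) SimpleGraph.Walk.nil)
  have hle : (GG r).dist (Sum.inr x) (Sum.inr y) ≤ 2 := by
    have := SimpleGraph.dist_le (SimpleGraph.Walk.cons (adj_rl r (a := 0))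
      (SimpleGraph.Walk.cons (adj_lr r) SimpleGraph.Walk.nil)) (u := Sum.inr x) (v := Sum.inr y)
    simpa using this
  have h0 : (GG r).dist (Sum.inr x) (Sum.inr y) ≠ 0 := by
    intro h0
    rcases SimpleGraph.dist_eq_zero_iff_eq_or_not_reachable.mp h0 with h1 | h1
    · exact h (Sum.inr_injective h1)
    · exact h1 ⟨hwalk⟩
  have h1 : (GG r).dist (Sum.inr x) (Sum.inr y) ≠ 1 := by
    intro h1
    have := (adj_rr r).mp (SimpleGraph.dist_eq_one_iff_adj.mp h1)
    exact hna ⟨this.2.1, this.2.2⟩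
  omega

lemma ecc_l (hk : 4 ≤ k) (hr : ∀ i, 1 ≤ r i) (a : Fin 2) : ecc (GG r) (Sum.inl a) = 1 := by
  have i0 : Fin (k - 1) := ⟨0, by omega⟩
  apply le_antisymm
  · apply Finset.sup_le
    rintro (b | x) _
    · rcases eq_or_ne a b with h | h
      · simp [h, SimpleGraph.dist_self]
      · exact (dist_ll r h).le
    · exact (dist_lr r).le
  · have : (GG r).dist (Sum.inl a) (Sum.inr ⟨i0, ⟨0, hr i0⟩⟩) = 1 := dist_lr r
    calc (1 : ℕ) = (GG r).dist (Sum.inl a) (Sum.inr ⟨i0, ⟨0, hr i0⟩⟩) := this.symm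
    _ ≤ _ := Finset.le_sup (Finset.mem_univ _)

lemma ecc_r (hk : 4 ≤ k) (hr : ∀ i, 1 ≤ r i) (x : Σ i, Fin (r i)) : ecc (GG r) (Sum.inr x) = 2 := by
  apply le_antisymm
  · apply Finset.sup_le
    rintro (b | y) _
    · exact (dist_rl r).le.trans one_le_two
    · rcases eq_or_ne x y with h | h
      · simp [h, SimpleGraph.dist_self]
      · by_cases h2 : x.1 = y.1 ∧ (x.1 : ℕ) ≠ 0
        · exact (dist_rr_one r h h2.1 h2.2).le.trans one_le_two
        · exact (dist_rr_two r h h2).le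
  · obtain ⟨j, hj⟩ : ∃ j : Fin (k - 1), j ≠ x.1 := by
      have hcard : 1 < Fintype.card (Fin (k - 1)) := by simp; omega
      exact Fintype.exists_ne_of_one_lt_card hcard x.1
    set y : Σ i, Fin (r i) := ⟨j, ⟨0, hr j⟩⟩ with hy
    have hxy : x ≠ y := by
      intro h; exact hj (by rw [h])
    have : (GG r).dist (Sum.inr x) (Sum.inr y) = 2 := by
      apply dist_rr_two r hxy
      intro hcon
      exact hj (by rw [hcon.1])
    calc (2 : ℕ) = (GG r).dist (Sum.inr x) (Sum.inr y) := this.symm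
    _ ≤ _ := Finset.le_sup (Finset.mem_univ _)


/-- Explicit form of the eccentricity matrix. -/
private def Emat : Matrix (Fin 2 ⊕ Σ i : Fin (k - 1), Fin (r i))
    (Fin 2 ⊕ Σ i : Fin (k - 1), Fin (r i)) ℝ := fun u v =>
  match u, v with
  | Sum.inl a, Sum.inl b => if a = b then 0 else 1
  | Sum.inl _, Sum.inr _ => 1
  | Sum.inr _, Sum.inl _ => 1
  | Sum.inr x, Sum.inr y =>
      if x = y then 0 else if x.1 = y.1 ∧ (x.1 : ℕ) ≠ 0 then 0 else 2

lemma eccMatrix_eq (hk : 4 ≤ k) (hr : ∀ i, 1 ≤ r i) :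
    eccMatrix (GG r) = Emat r := by
  ext u v
  rcases u with a | x <;> rcases v with b | y <;>
    simp only [eccMatrix, Emat, ecc_l r hk hr, ecc_r r hk hr]
  · rcases eq_or_ne a b with h | h
    · simp [h, SimpleGraph.dist_self]
    · simp [h, dist_ll r h]
  · simp [dist_lr r]
  · simp [dist_rl r]
  · rcases eq_or_ne x y with h | h
    · simp [h, SimpleGraph.dist_self]
    · by_cases h2 : x.1 = y.1 ∧ (x.1 : ℕ) ≠ 0
      · have hy0 : (y.1 : ℕ) ≠ 0 := h2.1 ▸ h2.2
        simp [h, h2, dist_rr_one r h h2.1 h2.2, hy0]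
      · simp [h, h2, dist_rr_two r h h2]


private def tB (x : (Fin 2 ⊕ Σ i : Fin (k - 1), Fin (r i)) → ℝ) (i : Fin (k - 1)) : ℝ :=
  ∑ j : Fin (r i), x (Sum.inr ⟨i, j⟩)

private def qB (x : (Fin 2 ⊕ Σ i : Fin (k - 1), Fin (r i)) → ℝ) (i : Fin (k - 1)) : ℝ :=
  ∑ j : Fin (r i), x (Sum.inr ⟨i, j⟩) ^ 2

lemma mulVec_inl (x : (Fin 2 ⊕ Σ i : Fin (k - 1), Fin (r i)) → ℝ) (a : Fin 2) :
    (Emat r *ᵥ x) (Sum.inl a)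
      = (x (Sum.inl 0) + x (Sum.inl 1) - x (Sum.inl a)) + ∑ i, tB r x i := by
  show ∑ v, Emat r (Sum.inl a) v * x v = _
  rw [Fintype.sum_sum_type]
  have h2 : ∑ σ : Σ i : Fin (k - 1), Fin (r i), Emat r (Sum.inl a) (Sum.inr σ) * x (Sum.inr σ)
      = ∑ i, tB r x i := by
    rw [← Finset.univ_sigma_univ, Finset.sum_sigma]
    refine Finset.sum_congr rfl fun i _ => ?_
    refine Finset.sum_congr rfl fun j _ => ?_
    simp [Emat]
  rw [h2]
  congr 1
  rw [Fin.sum_univ_two]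
  fin_cases a <;> simp [Emat] <;> ring

lemma mulVec_inr (x : (Fin 2 ⊕ Σ i : Fin (k - 1), Fin (r i)) → ℝ)
    (i : Fin (k - 1)) (j : Fin (r i)) :
    (Emat r *ᵥ x) (Sum.inr ⟨i, j⟩)
      = (x (Sum.inl 0) + x (Sum.inl 1)) + 2 * (∑ i', tB r x i')
        - (if (i : ℕ) = 0 then 2 * x (Sum.inr ⟨i, j⟩) else 2 * tB r x i) := by
  show ∑ v, Emat r (Sum.inr ⟨i, j⟩) v * x v = _
  rw [Fintype.sum_sum_type]
  have h1 : ∑ b : Fin 2, Emat r (Sum.inr ⟨i, j⟩) (Sum.inl b) * x (Sum.inl b)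
      = x (Sum.inl 0) + x (Sum.inl 1) := by
    rw [Fin.sum_univ_two]; simp [Emat]
  have key : ∀ i' : Fin (k - 1),
      (∑ j' : Fin (r i'), Emat r (Sum.inr ⟨i, j⟩) (Sum.inr ⟨i', j'⟩) * x (Sum.inr ⟨i', j'⟩))
      = if i' = i then (if (i : ℕ) = 0 then 2 * tB r x i - 2 * x (Sum.inr ⟨i, j⟩) else 0)
        else 2 * tB r x i' := by
    intro i'
    rcases eq_or_ne i' i with h | h
    · subst h
      by_cases h0 : (i' : ℕ) = 0
      · simp only [if_pos rfl, if_pos h0]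
        have hent : ∀ j' : Fin (r i'), Emat r (Sum.inr ⟨i', j⟩) (Sum.inr ⟨i', j'⟩)
            = if j = j' then 0 else 2 := by
          intro j'
          simp [Emat, Sigma.mk.inj_iff, h0]
        rw [Finset.sum_congr rfl fun j' _ => by rw [hent j']]
        have : ∀ j' : Fin (r i'), (if j = j' then (0:ℝ) else 2) * x (Sum.inr ⟨i', j'⟩)
            = 2 * x (Sum.inr ⟨i', j'⟩) - (if j = j' then 2 * x (Sum.inr ⟨i', j'⟩) else 0) := by
          intro j'; split_ifs <;> ring
        rw [Finset.sum_congr rfl fun j' _ => this j', Finset.sum_sub_distrib,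
          Finset.sum_ite_eq]
        simp [tB, Finset.mul_sum]
      · simp only [if_pos rfl, if_neg h0]
        have hent : ∀ j' : Fin (r i'), Emat r (Sum.inr ⟨i', j⟩) (Sum.inr ⟨i', j'⟩) = 0 := by
          intro j'
          simp [Emat, Sigma.mk.inj_iff, h0]
        rw [Finset.sum_congr rfl fun j' _ => by rw [hent j']]
        simp
    · rw [if_neg h]
      have hent : ∀ j' : Fin (r i'), Emat r (Sum.inr ⟨i, j⟩) (Sum.inr ⟨i', j'⟩) = 2 := by
        intro j'
        have hne : (⟨i, j⟩ : Σ i, Fin (r i)) ≠ ⟨i', j'⟩ := by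
          intro hc; exact h (congrArg Sigma.fst hc).symm
        show (if (⟨i, j⟩ : Σ i, Fin (r i)) = ⟨i', j'⟩ then (0:ℝ)
          else if (⟨i, j⟩ : Σ i, Fin (r i)).1 = (⟨i', j'⟩ : Σ i, Fin (r i)).1
            ∧ ((⟨i, j⟩ : Σ i, Fin (r i)).1 : ℕ) ≠ 0 then 0 else 2) = 2
        rw [if_neg hne, if_neg (by rintro ⟨hc, -⟩; exact h hc.symm)]
      rw [Finset.sum_congr rfl fun j' _ => by rw [hent j']]
      simp [tB, Finset.mul_sum]
  have h2 : ∑ σ : Σ i' : Fin (k - 1), Fin (r i'),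
        Emat r (Sum.inr ⟨i, j⟩) (Sum.inr σ) * x (Sum.inr σ)
      = 2 * (∑ i', tB r x i')
        - (if (i : ℕ) = 0 then 2 * x (Sum.inr ⟨i, j⟩) else 2 * tB r x i) := by
    rw [← Finset.univ_sigma_univ, Finset.sum_sigma]
    rw [Finset.sum_congr rfl fun i' _ => key i']
    rw [← Finset.add_sum_erase _ _ (Finset.mem_univ i)]
    rw [if_pos rfl]
    rw [Finset.sum_congr rfl fun i' hi' => if_neg (Finset.ne_of_mem_erase hi')]
    rw [Finset.sum_erase_eq_sub (Finset.mem_univ i)]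
    rw [Finset.mul_sum]
    by_cases h0 : (i : ℕ) = 0 <;> simp [h0, Finset.mul_sum] <;> ring
  rw [h1, h2]
  ring


lemma quad_eq (x : (Fin 2 ⊕ Σ i : Fin (k - 1), Fin (r i)) → ℝ) :
    x ⬝ᵥ (Emat r *ᵥ x)
      = 2 * x (Sum.inl 0) * x (Sum.inl 1)
        + 2 * (x (Sum.inl 0) + x (Sum.inl 1)) * (∑ i, tB r x i)
        + 2 * (∑ i, tB r x i) ^ 2
        - 2 * ∑ i : Fin (k - 1), (if (i : ℕ) = 0 then qB r x i else (tB r x i) ^ 2) := by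
  show ∑ u, x u * (Emat r *ᵥ x) u = _
  rw [Fintype.sum_sum_type]
  have hc : ∑ a : Fin 2, x (Sum.inl a) * (Emat r *ᵥ x) (Sum.inl a)
      = 2 * x (Sum.inl 0) * x (Sum.inl 1)
        + (x (Sum.inl 0) + x (Sum.inl 1)) * (∑ i, tB r x i) := by
    rw [Fin.sum_univ_two, mulVec_inl r x 0, mulVec_inl r x 1]
    ring
  have key : ∀ i : Fin (k - 1),
      ∑ j : Fin (r i), x (Sum.inr ⟨i, j⟩) * (Emat r *ᵥ x) (Sum.inr ⟨i, j⟩)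
      = tB r x i * ((x (Sum.inl 0) + x (Sum.inl 1)) + 2 * (∑ i', tB r x i'))
        - 2 * (if (i : ℕ) = 0 then qB r x i else (tB r x i) ^ 2) := by
    intro i
    rw [Finset.sum_congr rfl fun j _ => by rw [mulVec_inr r x i j]]
    by_cases h0 : (i : ℕ) = 0
    · simp only [if_pos h0]
      have hpt : ∀ j : Fin (r i), x (Sum.inr ⟨i, j⟩)
            * ((x (Sum.inl 0) + x (Sum.inl 1)) + 2 * (∑ i', tB r x i')
              - 2 * x (Sum.inr ⟨i, j⟩))
          = x (Sum.inr ⟨i, j⟩) * ((x (Sum.inl 0) + x (Sum.inl 1)) + 2 * (∑ i', tB r x i'))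
            - 2 * x (Sum.inr ⟨i, j⟩) ^ 2 := fun j => by ring
      rw [Finset.sum_congr rfl fun j _ => hpt j, Finset.sum_sub_distrib, ← Finset.sum_mul,
        ← Finset.mul_sum]
      rfl
    · simp only [if_neg h0]
      have hpt : ∀ j : Fin (r i), x (Sum.inr ⟨i, j⟩)
            * ((x (Sum.inl 0) + x (Sum.inl 1)) + 2 * (∑ i', tB r x i') - 2 * tB r x i)
          = x (Sum.inr ⟨i, j⟩) * ((x (Sum.inl 0) + x (Sum.inl 1)) + 2 * (∑ i', tB r x i'))
            - 2 * (x (Sum.inr ⟨i, j⟩) * tB r x i) := fun j => by ring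
      rw [Finset.sum_congr rfl fun j _ => hpt j, Finset.sum_sub_distrib, ← Finset.sum_mul,
        ← Finset.mul_sum, ← Finset.sum_mul]
      show tB r x i * _ - 2 * (tB r x i * tB r x i) = _
      ring
  have hs : ∑ σ : Σ i : Fin (k - 1), Fin (r i), x (Sum.inr σ) * (Emat r *ᵥ x) (Sum.inr σ)
      = (∑ i, tB r x i) * ((x (Sum.inl 0) + x (Sum.inl 1)) + 2 * (∑ i', tB r x i'))
        - 2 * ∑ i : Fin (k - 1), (if (i : ℕ) = 0 then qB r x i else (tB r x i) ^ 2) := by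
    rw [← Finset.univ_sigma_univ, Finset.sum_sigma,
      Finset.sum_congr rfl fun i _ => key i, Finset.sum_sub_distrib, ← Finset.sum_mul,
      ← Finset.mul_sum]
  rw [hc, hs]
  ring

lemma wv_dot (x : (Fin 2 ⊕ Σ i : Fin (k - 1), Fin (r i)) → ℝ) :
    (Sum.elim (fun _ : Fin 2 => (1:ℝ)) (fun _ : Σ i : Fin (k - 1), Fin (r i) => (2:ℝ))) ⬝ᵥ x
      = (x (Sum.inl 0) + x (Sum.inl 1)) + 2 * (∑ i, tB r x i) := by
  show ∑ u, Sum.elim (fun _ : Fin 2 => (1:ℝ)) (fun _ : Σ i : Fin (k - 1), Fin (r i) => (2:ℝ)) u * x u = _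
  rw [Fintype.sum_sum_type, Fin.sum_univ_two]
  have hs : ∑ σ : Σ i : Fin (k - 1), Fin (r i),
        Sum.elim (fun _ : Fin 2 => (1:ℝ)) (fun _ : Σ i : Fin (k - 1), Fin (r i) => (2:ℝ)) (Sum.inr σ) * x (Sum.inr σ)
      = 2 * (∑ i, tB r x i) := by
    rw [← Finset.univ_sigma_univ, Finset.sum_sigma, Finset.mul_sum]
    refine Finset.sum_congr rfl fun i _ => ?_
    simp [tB, Finset.mul_sum]
  rw [hs]
  simp

lemma quad_nonpos (x : (Fin 2 ⊕ Σ i : Fin (k - 1), Fin (r i)) → ℝ)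
    (hx : (Sum.elim (fun _ : Fin 2 => (1:ℝ)) (fun _ : Σ i : Fin (k - 1), Fin (r i) => (2:ℝ))) ⬝ᵥ x = 0) :
    x ⬝ᵥ (Emat r *ᵥ x) ≤ 0 := by
  rw [wv_dot r x] at hx
  rw [quad_eq r x]
  have hg : 0 ≤ ∑ i : Fin (k - 1), (if (i : ℕ) = 0 then qB r x i else (tB r x i) ^ 2) := by
    refine Finset.sum_nonneg fun i _ => ?_
    split_ifs
    · exact Finset.sum_nonneg fun j _ => sq_nonneg _
    · exact sq_nonneg _
  nlinarith [sq_nonneg (x (Sum.inl 0) - x (Sum.inl 1)), hx, hg,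
    sq_nonneg (x (Sum.inl 0) + x (Sum.inl 1))]


lemma quad_pos (hk : 4 ≤ k) (hr : ∀ i, 1 ≤ r i) :
    ∃ x : (Fin 2 ⊕ Σ i : Fin (k - 1), Fin (r i)) → ℝ, 0 < x ⬝ᵥ (Emat r *ᵥ x) := by
  have h0 : 0 < k - 1 := by omega
  have h1 : 1 < k - 1 := by omega
  set i0 : Fin (k - 1) := ⟨0, h0⟩ with hi0
  set i1 : Fin (k - 1) := ⟨1, h1⟩ with hi1
  set u : Fin 2 ⊕ Σ i : Fin (k - 1), Fin (r i) := Sum.inr ⟨i0, ⟨0, hr i0⟩⟩ with hu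
  set v : Fin 2 ⊕ Σ i : Fin (k - 1), Fin (r i) := Sum.inr ⟨i1, ⟨0, hr i1⟩⟩ with hv
  refine ⟨Pi.single u 1 + Pi.single v 1, ?_⟩
  have hEuu : Emat r u u = 0 := by simp [Emat, hu]
  have hEvv : Emat r v v = 0 := by simp [Emat, hv]
  have hne01 : i0 ≠ i1 := by
    intro h; rw [hi0, hi1] at h; exact absurd (congrArg Fin.val h) (by simp)
  have huv : (⟨i0, ⟨0, hr i0⟩⟩ : Σ i, Fin (r i)) ≠ ⟨i1, ⟨0, hr i1⟩⟩ := by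
    intro h; exact hne01 (congrArg Sigma.fst h)
  have hvu : (⟨i1, ⟨0, hr i1⟩⟩ : Σ i, Fin (r i)) ≠ ⟨i0, ⟨0, hr i0⟩⟩ := fun h => huv h.symm
  have hEuv : Emat r u v = 2 := by
    rw [hu, hv]
    show (if (⟨i0, ⟨0, hr i0⟩⟩ : Σ i, Fin (r i)) = ⟨i1, ⟨0, hr i1⟩⟩ then (0:ℝ)
      else if (i0 : ℕ) = (i1 : ℕ) ∧ (i0 : ℕ) ≠ 0 then 0 else 2) = 2
    rw [if_neg huv, if_neg (by rintro ⟨hc, -⟩; simp [hi0, hi1] at hc)]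
  have hEvu : Emat r v u = 2 := by
    rw [hu, hv]
    show (if (⟨i1, ⟨0, hr i1⟩⟩ : Σ i, Fin (r i)) = ⟨i0, ⟨0, hr i0⟩⟩ then (0:ℝ)
      else if (i1 : ℕ) = (i0 : ℕ) ∧ (i1 : ℕ) ≠ 0 then 0 else 2) = 2
    rw [if_neg hvu, if_neg (by rintro ⟨hc, -⟩; simp [hi0, hi1] at hc)]
  have hcalc : (Pi.single u (1:ℝ) + Pi.single v 1) ⬝ᵥ (Emat r *ᵥ (Pi.single u 1 + Pi.single v 1))
      = Emat r u u + Emat r u v + Emat r v u + Emat r v v := by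
    rw [Matrix.mulVec_add, Matrix.mulVec_single, Matrix.mulVec_single,
      dotProduct_add, add_dotProduct, add_dotProduct,
      single_dotProduct, single_dotProduct,
      single_dotProduct, single_dotProduct]
    simp only [mul_one, one_mul, Pi.smul_apply, MulOpposite.op_one, one_smul, Matrix.col_apply]
    ring
  rw [hcalc, hEuu, hEvv, hEuv, hEvu]
  norm_num

end GraphPart

/-- for `k ≥ 4`, the join of `K₂` with the disjoint union of a coclique of
size `r 0` and cliques of sizes `r 1, …, r (k-2)` (a mixed extension of `S_k` of type
`(2, -r₂, r₃, …, r_k)`) has exactly one positive eccentricity eigenvalue. -/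
theorem stmt17 (k : ℕ) (hk : 4 ≤ k) (r : Fin (k - 1) → ℕ) (hr : ∀ i, 1 ≤ r i) :
    posEigCount (eccMatrix_isHermitian (graphJoin (⊤ : SimpleGraph (Fin 2))
      (blocksGraph r (fun i => (i : ℕ) ≠ 0)))) = 1 := by
  classical
  have hE : eccMatrix (graphJoin (⊤ : SimpleGraph (Fin 2))
      (blocksGraph r (fun i => (i : ℕ) ≠ 0))) = Emat r := eccMatrix_eq r hk hr
  unfold posEigCount
  apply le_antisymm
  · apply atMostOne _ (Sum.elim (fun _ : Fin 2 => (1:ℝ))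
      (fun _ : Σ i : Fin (k - 1), Fin (r i) => (2:ℝ)))
    intro x hx
    rw [hE]
    exact quad_nonpos r x hx
  · obtain ⟨x, hx⟩ := quad_pos r hk hr
    obtain ⟨i, hi⟩ := exists_pos_eig (eccMatrix_isHermitian (graphJoin (⊤ : SimpleGraph (Fin 2))
      (blocksGraph r (fun i => (i : ℕ) ≠ 0)))) x (by rw [hE]; exact hx)
    exact Finset.one_le_card.mpr ⟨i, Finset.mem_filter.mpr ⟨Finset.mem_univ _, hi⟩⟩
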